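/- If q lies in the complementary cone pos C_M(α) for some α ⊆ {1,…,n}, then the LCP (M,q) has at least one solution; if moreover C_M(α) is nonsingular, then the equation C_{−M}(α) x = q has a unique solution x in the orthant pos C_I(α). -/
import Mathlib


open Matrix

/-- Complementary matrix `C_M(α)`: j-th column is `-M_{·j}` if `j ∈ α`, else `e_j`. -/
def compMat {n : ℕ} (M : Matrix (Fin n) (Fin n) ℝ) (α : Finset (Fin n)) :
    Matrix (Fin n) (Fin n) ℝ :=
  fun i j => if j ∈ α then -M i j else (if i = j then 1 else 0)

/-- The orthant `pos C_I(α)`: `x_j ≤ 0` for `j ∈ α`, `x_j ≥ 0` otherwise. -/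
def orthant {n : ℕ} (α : Finset (Fin n)) : Set (Fin n → ℝ) :=
  {x | ∀ j, if j ∈ α then x j ≤ 0 else 0 ≤ x j}

/-- The cone generated by the columns of `A`. -/
def posCone {n : ℕ} (A : Matrix (Fin n) (Fin n) ℝ) : Set (Fin n → ℝ) :=
  {q | ∃ p : Fin n → ℝ, (∀ j, 0 ≤ p j) ∧ q = A.mulVec p}

/-- The piecewise linear map `f_M`, in closed form: on the orthant
`pos C_I(α)` this map equals `x ↦ C_{-M}(α) x`. -/
def fpl {n : ℕ} (M : Matrix (Fin n) (Fin n) ℝ) (x : Fin n → ℝ) : Fin n → ℝ :=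
  fun i => max (x i) 0 - M.mulVec (fun j => max (-x j) 0) i

/-- `z` solves the LCP `(M, q)`: with `w = Mz + q`, one has `z ≥ 0`, `w ≥ 0`, `wᵀz = 0`. -/
def isLCPsol {ι : Type*} [Fintype ι] (M : Matrix ι ι ℝ) (q z : ι → ℝ) : Prop :=
  (∀ i, 0 ≤ z i) ∧ (∀ i, 0 ≤ (M.mulVec z + q) i) ∧ (∀ i, (M.mulVec z + q) i * z i = 0)

lemma compMat_mulVec {n : ℕ} (M : Matrix (Fin n) (Fin n) ℝ) (α : Finset (Fin n))
    (p : Fin n → ℝ) (i : Fin n) :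
    (compMat M α).mulVec p i =
      (if i ∈ α then 0 else p i) - M.mulVec (fun j => if j ∈ α then p j else 0) i := by
  simp only [compMat, Matrix.mulVec, dotProduct]
  have h : ∀ j : Fin n, (if j ∈ α then -M i j else if i = j then (1:ℝ) else 0) * p j
      = (if i = j then (if j ∈ α then (0:ℝ) else p j) else 0)
        - M i j * (if j ∈ α then p j else 0) := by
    intro j
    by_cases h1 : j ∈ α <;> by_cases h2 : i = j <;> simp [h1, h2]
  rw [Finset.sum_congr rfl (fun j _ => h j), Finset.sum_sub_distrib]
  congr 1
  rw [Finset.sum_ite_eq (Finset.univ) i (fun j => if j ∈ α then (0:ℝ) else p j)]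
  simp

lemma compMat_neg {n : ℕ} (M : Matrix (Fin n) (Fin n) ℝ) (α : Finset (Fin n)) :
    compMat (-M) α = compMat M α * Matrix.diagonal (fun j => if j ∈ α then (-1:ℝ) else 1) := by
  funext i j
  rw [Matrix.mul_diagonal]
  by_cases h : j ∈ α <;> simp [compMat, h]

theorem stmt_5 {n : ℕ} (M : Matrix (Fin n) (Fin n) ℝ) (q : Fin n → ℝ)
    (α : Finset (Fin n)) (hq : q ∈ posCone (compMat M α)) :
    (∃ z, isLCPsol M q z) ∧
    ((compMat M α).det ≠ 0 →
      ∃! x, x ∈ orthant α ∧ (compMat (-M) α).mulVec x = q) := by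
  obtain ⟨p, hp, hqp⟩ := hq
  constructor
  · refine ⟨fun j => if j ∈ α then p j else 0, ?_, ?_, ?_⟩
    · intro i; by_cases h : i ∈ α <;> simp [h, hp i]
    · intro i
      have : (M.mulVec (fun j => if j ∈ α then p j else 0) + q) i
          = if i ∈ α then 0 else p i := by
        simp only [Pi.add_apply, hqp, compMat_mulVec]; ring
      rw [this]
      by_cases h : i ∈ α <;> simp [h, hp i]
    · intro i
      have : (M.mulVec (fun j => if j ∈ α then p j else 0) + q) i
          = if i ∈ α then 0 else p i := by
        simp only [Pi.add_apply, hqp, compMat_mulVec]; ring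
      rw [this]
      by_cases h : i ∈ α <;> simp [h]
  · intro hdet
    set A := compMat (-M) α with hA
    have hdetA : A.det ≠ 0 := by
      rw [hA, compMat_neg, Matrix.det_mul, Matrix.det_diagonal]
      refine mul_ne_zero hdet (Finset.prod_ne_zero_iff.2 fun j _ => ?_)
      by_cases h : j ∈ α <;> simp [h]
    have hAx : A.mulVec (fun j => if j ∈ α then -p j else p j) = q := by
      funext i
      rw [hqp]
      simp only [Matrix.mulVec, dotProduct, hA]
      refine Finset.sum_congr rfl fun j _ => ?_
      by_cases h : j ∈ α <;> simp [compMat, h] <;> ring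
    refine ⟨fun j => if j ∈ α then -p j else p j, ⟨?_, hAx⟩, ?_⟩
    · intro j; by_cases h : j ∈ α <;> simp [h, hp j]
    · intro y ⟨_, hy⟩
      have hinj : Function.Injective A.mulVec := by
        intro x y h
        have h2 := congrArg (A⁻¹.mulVec) h
        rwa [Matrix.mulVec_mulVec, Matrix.mulVec_mulVec,
          Matrix.nonsing_inv_mul A (isUnit_iff_ne_zero.mpr hdetA),
          Matrix.one_mulVec, Matrix.one_mulVec] at h2
      exact hinj (hy.trans hAx.symm)
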